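/- Let A : ℂ^M → ℂ^L, C : ℂ^L → ℂ^M be linear maps and B : ℂ^M → ℂ^M diagonalizable with spectral decomposition B = Σ_{i=1}^M b_i P_i, where the P_i are rank-one idempotents with P_i P_j = 0 for i ≠ j and Σ P_i = 1. Then det_L(A B C) = Σ_{I ⊆ {1,…,M}, |I| = L} (∏_{i∈I} b_i) · det_L(Σ_{i∈I} A P_i C). -/

import Mathlib

open Matrix Finset

noncomputable section

lemma my_rank_one_factor {M : ℕ} (N : Matrix (Fin M) (Fin M) ℂ) (h : N.rank ≤ 1) :
    ∃ u v : Fin M → ℂ, ∀ k l, N k l = u k * v l := by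
  rw [Matrix.rank] at h
  obtain ⟨w, hw⟩ := finrank_le_one_iff.mp h
  choose c hc using hw
  refine ⟨(w : Fin M → ℂ), fun l => c ⟨N.mulVec (Pi.single l 1), ⟨Pi.single l 1, rfl⟩⟩,
    fun k l => ?_⟩
  have hc' := congrArg Subtype.val (hc ⟨N.mulVec (Pi.single l 1), ⟨Pi.single l 1, rfl⟩⟩)
  have h2 := congrFun hc' k
  simp only [Submodule.coe_smul, Pi.smul_apply, smul_eq_mul] at h2
  have h3 : N.mulVec (Pi.single l 1) k = N k l := by
    simp [Matrix.mulVec_single]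
  rw [← h3, ← h2, mul_comm]

lemma my_det_expand {L M : ℕ} (S : Finset (Fin M)) (w v : Fin M → Fin L → ℂ) :
    (Matrix.of fun k l => ∑ i ∈ S, w i k * v i l).det
      = ∑ r ∈ Fintype.piFinset (fun _ : Fin L => S),
          (∏ k, w (r k) k) * (Matrix.of fun k l => v (r k) l).det := by
  have h0 : (Matrix.of fun k l => ∑ i ∈ S, w i k * v i l : Matrix (Fin L) (Fin L) ℂ)
      = fun k => ∑ i ∈ S, w i k • v i := by
    ext k l
    simp [Finset.sum_apply]
  show Matrix.detRowAlternating _ = _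
  rw [h0, ← AlternatingMap.coe_multilinearMap]
  rw [(Matrix.detRowAlternating :
      (Fin L → ℂ) [⋀^Fin L]→ₗ[ℂ] ℂ).toMultilinearMap.map_sum_finset
      (fun k i => w i k • v i) (fun _ => S)]
  refine Finset.sum_congr rfl fun r _ => ?_
  rw [MultilinearMap.map_smul_univ, smul_eq_mul]
  rfl

lemma my_det_sum_outer (L M : ℕ) (x : Fin M → ℂ) (u v : Fin M → Fin L → ℂ) :
    (Matrix.of fun k l => ∑ i, x i * u i k * v i l).det
      = ∑ I ∈ Finset.powersetCard L (Finset.univ : Finset (Fin M)),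
          (∏ i ∈ I, x i) * (Matrix.of fun k l => ∑ i ∈ I, u i k * v i l).det := by
  classical
  set D : (Fin L → Fin M) → ℂ := fun r => (Matrix.of fun k l => v (r k) l).det with hD
  have hzero : ∀ r : Fin L → Fin M, ¬ Function.Injective r → D r = 0 := by
    intro r hr
    rw [Function.not_injective_iff] at hr
    obtain ⟨a, b, hab, hne⟩ := hr
    exact Matrix.det_zero_of_row_eq hne (by ext l; simp [hab])
  set G : (Fin L → Fin M) → ℂ := fun r => (∏ k, u (r k) k) * D r with hG
  set F : (Fin L → Fin M) → ℂ := fun r => (∏ k, x (r k)) * G r with hF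
  have e1 : (Matrix.of fun k l => ∑ i, x i * u i k * v i l).det
      = ∑ r ∈ Fintype.piFinset (fun _ : Fin L => (univ : Finset (Fin M))), F r := by
    have := my_det_expand (univ : Finset (Fin M)) (fun i k => x i * u i k) v
    rw [this]
    refine Finset.sum_congr rfl fun r _ => ?_
    simp only [hF, hG, hD]
    rw [Finset.prod_mul_distrib, mul_assoc]
  have e2 : ∀ I : Finset (Fin M),
      (Matrix.of fun k l => ∑ i ∈ I, u i k * v i l).det
        = ∑ r ∈ Fintype.piFinset (fun _ : Fin L => I), G r := fun I =>
    my_det_expand I u v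
  rw [e1]
  -- restrict to injective
  have einj : ∀ S : Finset (Fin M), ∀ H : (Fin L → Fin M) → ℂ,
      (∀ r, ¬ Function.Injective r → H r = 0) →
      ∑ r ∈ Fintype.piFinset (fun _ : Fin L => S), H r
        = ∑ r ∈ (Fintype.piFinset (fun _ : Fin L => S)).filter
            (fun r => Function.Injective r), H r := by
    intro S H hH
    rw [Finset.sum_filter_of_ne]
    intro r _ hr
    by_contra hni
    exact hr (hH r hni)
  have hFzero : ∀ r, ¬ Function.Injective r → F r = 0 := by
    intro r hr; simp [hF, hG, hzero r hr]
  have hGzero : ∀ r, ¬ Function.Injective r → G r = 0 := by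
    intro r hr; simp [hG, hzero r hr]
  rw [einj _ F hFzero]
  rw [← Finset.sum_fiberwise_of_maps_to (g := fun r : Fin L → Fin M => Finset.image r univ)
      (t := Finset.powersetCard L (univ : Finset (Fin M))) ?_ F]
  · refine Finset.sum_congr rfl fun I hI => ?_
    have hIcard : I.card = L := (Finset.mem_powersetCard.mp hI).2
    have hsetEq : ((Fintype.piFinset (fun _ : Fin L => (univ : Finset (Fin M)))).filter
          (fun r => Function.Injective r)).filter (fun r => Finset.image r univ = I)
        = (Fintype.piFinset (fun _ : Fin L => I)).filter (fun r => Function.Injective r) := by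
      ext r
      constructor
      · intro h
        have h1 := Finset.mem_filter.mp h
        have h2 := Finset.mem_filter.mp h1.1
        have hrinj : Function.Injective r := h2.2
        have hrim := h1.2
        refine Finset.mem_filter.mpr ⟨Fintype.mem_piFinset.mpr fun k => ?_, hrinj⟩
        rw [← hrim]; exact Finset.mem_image_of_mem r (Finset.mem_univ k)
      · intro h
        have h1 := Finset.mem_filter.mp h
        have hmem := Fintype.mem_piFinset.mp h1.1
        have hrinj := h1.2
        refine Finset.mem_filter.mpr ⟨Finset.mem_filter.mpr
          ⟨Fintype.mem_piFinset.mpr fun k => Finset.mem_univ _, hrinj⟩, ?_⟩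
        refine Finset.eq_of_subset_of_card_le (fun i hi => ?_) ?_
        · obtain ⟨k, _, rfl⟩ := Finset.mem_image.mp hi
          exact hmem k
        · rw [Finset.card_image_of_injective _ hrinj, Finset.card_univ, Fintype.card_fin,
            hIcard]
      
    rw [hsetEq, e2 I, einj _ G hGzero, Finset.mul_sum]
    refine Finset.sum_congr rfl fun r hr => ?_
    obtain ⟨hmem, hrinj⟩ := Finset.mem_filter.mp hr
    have hrim : Finset.image r univ = I := by
      refine Finset.eq_of_subset_of_card_le ?_ ?_
      · intro i hi
        obtain ⟨k, _, rfl⟩ := Finset.mem_image.mp hi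
        exact (Fintype.mem_piFinset.mp hmem) k
      · rw [Finset.card_image_of_injective _ hrinj, Finset.card_univ, Fintype.card_fin, hIcard]
    have : ∏ k, x (r k) = ∏ i ∈ I, x i := by
      rw [← hrim, Finset.prod_image (fun a _ b _ hab => hrinj hab)]
    simp only [hF]
    rw [this]
  · intro r hr
    obtain ⟨_, hrinj⟩ := Finset.mem_filter.mp hr
    rw [Finset.mem_powersetCard]
    exact ⟨Finset.subset_univ _,
      by rw [Finset.card_image_of_injective _ hrinj, Finset.card_univ, Fintype.card_fin]⟩

theorem det_mul_diagonalizable_mul (L M : ℕ) (hL : 1 ≤ L) (hLM : L ≤ M)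
    (A : Matrix (Fin L) (Fin M) ℂ) (C : Matrix (Fin M) (Fin L) ℂ)
    (B : Matrix (Fin M) (Fin M) ℂ) (b : Fin M → ℂ)
    (P : Fin M → Matrix (Fin M) (Fin M) ℂ)
    (hB : B = ∑ i, b i • P i)
    (hidem : ∀ i, P i * P i = P i)
    (hrank : ∀ i, (P i).rank = 1)
    (horth : ∀ i j, i ≠ j → P i * P j = 0)
    (hsum : ∑ i, P i = 1) :
    (A * B * C).det
      = ∑ I ∈ Finset.powersetCard L (Finset.univ : Finset (Fin M)),
          (∏ i ∈ I, b i) * (A * (∑ i ∈ I, P i) * C).det := by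
  classical
  have hfac0 : ∀ i, ∃ u v : Fin M → ℂ, ∀ k l, P i k l = u k * v l := fun i =>
    my_rank_one_factor (P i) (le_of_eq (hrank i))
  choose u v hfac using hfac0
  set u' : Fin M → Fin L → ℂ := fun i k => ∑ s, A k s * u i s with hu'
  set v' : Fin M → Fin L → ℂ := fun i l => ∑ t, v i t * C t l with hv'
  have hAPC : ∀ i, A * P i * C = Matrix.of fun k l => u' i k * v' i l := by
    intro i
    ext k l
    simp only [Matrix.mul_apply, Matrix.of_apply, hu', hv', hfac i]
    rw [Finset.mul_sum]
    refine Finset.sum_congr rfl fun t _ => ?_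
    rw [Finset.sum_mul, Finset.sum_mul]
    refine Finset.sum_congr rfl fun s _ => ?_
    ring
  have hABC : A * B * C = Matrix.of fun k l => ∑ i, b i * u' i k * v' i l := by
    rw [hB, Matrix.mul_sum, Matrix.sum_mul]
    ext k l
    rw [Matrix.sum_apply]
    rw [Matrix.of_apply]
    refine Finset.sum_congr rfl fun i _ => ?_
    rw [Matrix.mul_smul, Matrix.smul_mul]
    rw [Matrix.smul_apply]  -- entry of smul matrix
    rw [show A * P i * C = Matrix.of fun k l => u' i k * v' i l from hAPC i]
    simp [mul_assoc]
  have hQ : ∀ I : Finset (Fin M), A * (∑ i ∈ I, P i) * C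
      = Matrix.of fun k l => ∑ i ∈ I, u' i k * v' i l := by
    intro I
    rw [Matrix.mul_sum, Matrix.sum_mul]
    ext k l
    rw [Matrix.sum_apply, Matrix.of_apply]
    refine Finset.sum_congr rfl fun i _ => ?_
    rw [show A * P i * C = Matrix.of fun k l => u' i k * v' i l from hAPC i]
    rfl
  rw [hABC]
  simp only [hQ]
  exact my_det_sum_outer L M b u' v'
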